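/- Let μ > 0, α > 0 with 1 - 4μα ≥ 0, and let f solve μ f'' + f' + α f = 0 with f(0) = 0 and f'(0) = v. Then for all t ≥ 0, |f'(t)| ≤ 2 |v| e^{-α t}. -/

import Mathlib

open Real

private lemma constAux {h : ℝ → ℝ} (hd : ∀ t, 0 ≤ t → HasDerivAt h 0 t) {t : ℝ} (ht : 0 ≤ t) :
    h t = h 0 :=
  constant_of_has_deriv_right_zero
    (fun x hx => (hd x hx.1).continuousAt.continuousWithinAt)
    (fun x hx => (hd x hx.1).hasDerivWithinAt) t ⟨ht, le_refl t⟩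

set_option maxHeartbeats 1000000

/-- Overdamped oscillator μ f'' + f' + α f = 0 (1 - 4μα ≥ 0), f(0)=0, f'(0)=v:
    bound |f'(t)| ≤ 2 |v| e^{-α t}. -/
theorem stmt_4 (μ α v : ℝ) (hμ : 0 < μ) (hα : 0 < α) (hdisc : 0 ≤ 1 - 4 * μ * α)
    (f f' f'' : ℝ → ℝ)
    (hf : ∀ t, 0 ≤ t → HasDerivAt f (f' t) t)
    (hf' : ∀ t, 0 ≤ t → HasDerivAt f' (f'' t) t)
    (hode : ∀ t, 0 ≤ t → μ * f'' t + f' t + α * f t = 0)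
    (h0 : f 0 = 0) (h0' : f' 0 = v) :
    ∀ t, 0 ≤ t → |f' t| ≤ 2 * |v| * Real.exp (-(α * t)) := by
  have hμ' : μ ≠ 0 := ne_of_gt hμ
  obtain ⟨a, b, ha, hab, hsum, hprod⟩ :
      ∃ x y : ℝ, 0 < x ∧ x ≤ y ∧ μ * (x + y) = 1 ∧ μ * (x * y) = α := by
    set D : ℝ := Real.sqrt (1 - 4*μ*α) with hD
    have hD0 : 0 ≤ D := Real.sqrt_nonneg _
    have hDsq : D^2 = 1 - 4*μ*α := Real.sq_sqrt hdisc
    have hD1 : D < 1 := by nlinarith [mul_pos hμ hα]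
    refine ⟨(1 - D)/(2*μ), (1 + D)/(2*μ), ?_, ?_, ?_, ?_⟩
    · apply div_pos <;> linarith
    · exact (div_le_div_iff_of_pos_right (by linarith : (0:ℝ) < 2*μ)).mpr (by linarith)
    · field_simp; ring
    · field_simp; linear_combination (-1) * hDsq
  have hb : 0 < b := lt_of_lt_of_le ha hab
  have hgap : a - α = μ * a^2 := by linear_combination hprod - a * hsum
  have hαa : α ≤ a := by nlinarith [mul_nonneg hμ.le (sq_nonneg a)]
  have hαb : α ≤ b := hαa.trans hab
  -- step 1 : u = f' + a f satisfies u' = -b u, hence u s = v exp(-(b s))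
  set u : ℝ → ℝ := fun s => f' s + a * f s with hu_def
  have hu : ∀ s, 0 ≤ s → HasDerivAt u (-b * u s) s := by
    intro s hs
    have h1 := (hf' s hs).add ((hf s hs).const_mul a)
    refine h1.congr_deriv ?_
    have h2 := hode s hs
    simp only [hu_def]
    have h3 : μ * (-b * (f' s + a * f s)) = μ * (f'' s + a * f' s) := by
      linear_combination (-1 : ℝ) * h2 - f' s * hsum - f s * hprod
    exact (mul_left_cancel₀ hμ' h3).symm
  have key1 : ∀ s, 0 ≤ s → u s = v * exp (-(b*s)) := by
    have hc : ∀ s, 0 ≤ s → HasDerivAt (fun s => exp (b*s) * u s) 0 s := by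
      intro s hs
      have hexp : HasDerivAt (fun s : ℝ => exp (b*s)) (b * exp (b*s)) s := by
        simpa [mul_comm] using ((hasDerivAt_id s).const_mul b).exp
      have := hexp.mul (hu s hs)
      refine this.congr_deriv ?_
      ring
    intro s hs
    have h := constAux hc hs
    simp only [hu_def, mul_zero, Real.exp_zero, one_mul, h0, h0', add_zero] at h
    have hne := Real.exp_ne_zero (b*s)
    simp only [hu_def]
    rw [Real.exp_neg]
    field_simp
    linear_combination h
  -- step 2 : integral of exp(-(c s))
  set c : ℝ := b - a with hc_def
  have hc0 : 0 ≤ c := by rw [hc_def]; linarith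
  set I : ℝ → ℝ := fun s => if c = 0 then s else (1 - exp (-(c*s)))/c with hI_def
  have hIderiv : ∀ s, HasDerivAt I (exp (-(c*s))) s := by
    intro s
    by_cases h : c = 0
    · simp only [hI_def, if_pos h, h]
      simpa using hasDerivAt_id' s
    · simp only [hI_def, if_neg h]
      have h1 : HasDerivAt (fun s : ℝ => -(c*s)) (-c) s := by
        exact ((hasDerivAt_id' s).const_mul c).neg.congr_deriv (by ring)
      have h3 := (h1.exp.const_sub 1).div_const c
      refine h3.congr_deriv ?_
      field_simp
  have hI0 : I 0 = 0 := by
    simp only [hI_def]; split <;> simp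
  have hInn : ∀ s, 0 ≤ s → 0 ≤ I s := by
    intro s hs
    simp only [hI_def]; split
    · exact hs
    · have hcpos : 0 < c := lt_of_le_of_ne hc0 (Ne.symm ‹¬ c = 0›)
      apply div_nonneg ?_ hc0
      have : exp (-(c*s)) ≤ 1 := Real.exp_le_one_iff.mpr (by nlinarith)
      linarith
  have hIt : ∀ s, 0 ≤ s → I s ≤ s := by
    intro s hs
    simp only [hI_def]; split
    · exact le_refl s
    · have hcpos : 0 < c := lt_of_le_of_ne hc0 (Ne.symm ‹¬ c = 0›)
      rw [div_le_iff₀ hcpos]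
      have := Real.add_one_le_exp (-(c*s))
      nlinarith
  have hIc : 0 < c → ∀ s, I s ≤ 1/c := by
    intro hcpos s
    simp only [hI_def, if_neg (ne_of_gt hcpos)]
    exact (div_le_div_iff_of_pos_right hcpos).mpr (by nlinarith [exp_pos (-(c*s))])
  -- step 3 : f s = exp(-(a s)) * (v * I s)
  have keyf : ∀ s, 0 ≤ s → f s = exp (-(a*s)) * (v * I s) := by
    have hg : ∀ s, 0 ≤ s → HasDerivAt (fun s => exp (a*s) * f s - v * I s) 0 s := by
      intro s hs
      have hexp : HasDerivAt (fun s : ℝ => exp (a*s)) (a * exp (a*s)) s := by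
        simpa [mul_comm] using ((hasDerivAt_id s).const_mul a).exp
      have h1 := (hexp.mul (hf s hs)).sub ((hIderiv s).const_mul v)
      refine h1.congr_deriv ?_
      have h2 := key1 s hs
      simp only [hu_def] at h2
      have e1 : exp (a*s) * exp (-(b*s)) = exp (-(c*s)) := by
        rw [← Real.exp_add]; congr 1; rw [hc_def]; ring
      linear_combination (exp (a*s)) * h2 + v * e1
    intro s hs
    have h := constAux hg hs
    simp only [mul_zero, Real.exp_zero, one_mul, h0, hI0, sub_zero] at h
    have hne := Real.exp_ne_zero (a*s)
    rw [Real.exp_neg]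
    field_simp
    linear_combination h
  intro t ht
  have keyf' : f' t = v * (exp (-(b*t)) - a * exp (-(a*t)) * I t) := by
    have h2 := key1 t ht
    simp only [hu_def] at h2
    rw [keyf t ht] at h2
    linarith [h2]
  rw [keyf', abs_mul]
  have hY : (0:ℝ) ≤ a * exp (-(a*t)) * I t :=
    mul_nonneg (mul_nonneg ha.le (exp_pos _).le) (hInn t ht)
  have hXY : |exp (-(b*t)) - a * exp (-(a*t)) * I t|
      ≤ max (exp (-(b*t))) (a * exp (-(a*t)) * I t) := by
    have hX : (0:ℝ) ≤ exp (-(b*t)) := (exp_pos _).le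
    rw [abs_sub_le_iff]
    constructor
    · exact le_trans (by linarith) (le_max_left _ _)
    · exact le_trans (by linarith) (le_max_right _ _)
  have hea : exp (-(a*t)) ≤ exp (-(α*t)) := by
    apply Real.exp_le_exp.mpr
    nlinarith [mul_le_mul_of_nonneg_right hαa ht]
  have hmax : max (exp (-(b*t))) (a * exp (-(a*t)) * I t) ≤ 2 * exp (-(α*t)) := by
    apply max_le
    · have heb : exp (-(b*t)) ≤ exp (-(α*t)) := by
        apply Real.exp_le_exp.mpr
        nlinarith [mul_le_mul_of_nonneg_right hαb ht]
      linarith [exp_pos (-(α*t))]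
    · by_cases hcase : 3*a ≤ 2*b
      · have hcpos : 0 < c := by rw [hc_def]; linarith
        have h1 : I t ≤ 1/c := hIc hcpos t
        have h2 := mul_le_mul_of_nonneg_left h1
          (by positivity : (0:ℝ) ≤ a * exp (-(a*t)))
        have h3 : a * (1/c) ≤ 2 := by
          rw [mul_one_div, div_le_iff₀ hcpos, hc_def]; linarith
        calc a * exp (-(a*t)) * I t ≤ a * exp (-(a*t)) * (1/c) := h2
          _ = a * (1/c) * exp (-(a*t)) := by ring
          _ ≤ 2 * exp (-(a*t)) := mul_le_mul_of_nonneg_right h3 (exp_pos _).le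
          _ ≤ 2 * exp (-(α*t)) := by linarith
      · push_neg at hcase
        have h1 : I t ≤ t := hIt t ht
        have h5 : 2*a/5 ≤ a - α := by
          rw [hgap]
          nlinarith [mul_pos hμ ha, mul_pos hμ hb, mul_lt_mul_of_pos_left hcase hμ]
        have hscalar : a*t ≤ 2 * exp ((a-α)*t) := by
          have h6 : exp ((2*a/5)*t) ≤ exp ((a-α)*t) :=
            Real.exp_le_exp.mpr (mul_le_mul_of_nonneg_right h5 ht)
          have hy : (0:ℝ) ≤ (2*a/5)*t := by positivity
          have hsq : exp ((2*a/5)*t) = exp ((2*a/5)*t/2) ^ 2 := by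
            rw [sq, ← Real.exp_add]; congr 1; ring
          have h7 := Real.add_one_le_exp ((2*a/5)*t/2)
          have h8 := mul_le_mul h7 h7 (by linarith : (0:ℝ) ≤ (2*a/5)*t/2 + 1)
            (exp_pos ((2*a/5)*t/2)).le
          nlinarith [h6, hsq, h8, hy, sq_nonneg ((2*a/5)*t - 1)]
        have h2 := mul_le_mul_of_nonneg_left h1
          (by positivity : (0:ℝ) ≤ a * exp (-(a*t)))
        calc a * exp (-(a*t)) * I t ≤ a * exp (-(a*t)) * t := h2
          _ = (a * t) * exp (-(a*t)) := by ring
          _ ≤ (2 * exp ((a-α)*t)) * exp (-(a*t)) :=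
              mul_le_mul_of_nonneg_right hscalar (exp_pos _).le
          _ = 2 * exp (-(α*t)) := by
              rw [mul_assoc, ← Real.exp_add]; congr 2; ring
  calc |v| * |exp (-(b*t)) - a * exp (-(a*t)) * I t|
      ≤ |v| * (2 * exp (-(α*t))) :=
        mul_le_mul_of_nonneg_left (le_trans hXY hmax) (abs_nonneg v)
    _ = 2 * |v| * exp (-(α*t)) := by ring
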